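/- (Proposition 3) Let G=(V,E) be a finite simple undirected graph with edge weights w:E→ℚ containing a triangle with edges {v1,v2}, {v1,v3}, {v2,v3}∈E such that w({v1,v2})>0, w({v1,v3})>0, and w({v2,v3})<0. Let V1⊂V be such that {v1,v2},{v1,v3}∈δ(V1), and let V2⊂V be such that {v1,v2},{v2,v3}∈δ(V2). If w({v1,v2}) + w({v1,v3}) ≥ Σ_{e∈δ(V1)∖{{v1,v2},{v1,v3}}} |w(e)| and w({v1,v2}) − w({v2,v3}) ≥ Σ_{e∈δ(V2)∖{{v1,v2},{v2,v3}}} |w(e)|, then there exists an optimal solution x∈{0,1}^E of the maximum-cut instance (G,w) with x({v1,v2})=1. -/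

import Mathlib

variable {V : Type*}

/-- `e` is an edge of `G` that crosses the cut induced by the vertex set `U`,
i.e. `e ∈ δ(U) := {{u,v} ∈ E : u ∈ U, v ∉ U}`. -/
def inCutSet (G : SimpleGraph V) (U : Set V) (e : Sym2 V) : Prop :=
  e ∈ G.edgeSet ∧ (∃ u ∈ e, u ∈ U) ∧ ∃ v ∈ e, v ∉ U

/-- The edge cut `δ(U)` as a finset. -/
noncomputable def cutFinset [Fintype V] (G : SimpleGraph V) (U : Set V) :
    Finset (Sym2 V) := by
  classical
  exact Finset.univ.filter (inCutSet G U)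

/-- The weight `w(δ(U))` of the cut induced by `U`. -/
noncomputable def cutWeight [Fintype V] (G : SimpleGraph V) (w : Sym2 V → ℚ) (U : Set V) : ℚ :=
  ∑ e ∈ cutFinset G U, w e

lemma mem_cutFinset [Fintype V] {G : SimpleGraph V} {U : Set V} {e : Sym2 V} :
    e ∈ cutFinset G U ↔ inCutSet G U e := by
  classical
  simp [cutFinset]

lemma inCut_mk {G : SimpleGraph V} {S : Set V} {a b : V} :
    inCutSet G S s(a, b) ↔ s(a, b) ∈ G.edgeSet ∧ Xor' (a ∈ S) (b ∈ S) := by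
  simp only [inCutSet, Sym2.mem_iff, Xor']
  constructor
  · rintro ⟨he, ⟨u, hu, huS⟩, ⟨v, hv, hvS⟩⟩
    refine ⟨he, ?_⟩
    rcases hu with rfl | rfl <;> rcases hv with rfl | rfl <;> tauto
  · rintro ⟨he, h⟩
    refine ⟨he, ?_, ?_⟩ <;> rcases h with ⟨h1, h2⟩ | ⟨h1, h2⟩
    · exact ⟨a, Or.inl rfl, h1⟩
    · exact ⟨b, Or.inr rfl, h1⟩
    · exact ⟨b, Or.inr rfl, h2⟩
    · exact ⟨a, Or.inl rfl, h2⟩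

lemma cutFinset_symmDiff [Fintype V] [DecidableEq V] (G : SimpleGraph V) (S U : Set V) :
    cutFinset G (symmDiff S U) = symmDiff (cutFinset G S) (cutFinset G U) := by
  ext e
  induction e using Sym2.ind with
  | _ a b =>
    simp only [Finset.mem_symmDiff, mem_cutFinset, inCut_mk, Set.mem_symmDiff, Xor', Xor]
    by_cases hE : s(a, b) ∈ G.edgeSet <;> tauto

lemma cutWeight_symmDiff [Fintype V] [DecidableEq V] (G : SimpleGraph V) (w : Sym2 V → ℚ) (S U : Set V) :
    cutWeight G w (symmDiff S U) = cutWeight G w S +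
      ∑ e ∈ cutFinset G U, (if e ∈ cutFinset G S then -w e else w e) := by
  classical
  set A := cutFinset G S with hA
  set B := cutFinset G U with hB
  have h1 : cutWeight G w (symmDiff S U) = ∑ e ∈ A \ B, w e + ∑ e ∈ B \ A, w e := by
    rw [cutWeight, cutFinset_symmDiff, symmDiff_def, Finset.sup_eq_union,
      Finset.sum_union disjoint_sdiff_sdiff]
  have h2 : cutWeight G w S = ∑ e ∈ A \ B, w e + ∑ e ∈ A ∩ B, w e := by
    rw [cutWeight, ← hA, ← Finset.sum_sdiff (Finset.inter_subset_left (s₂ := B)),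
      Finset.sdiff_inter_self_left]
  have h3 : ∑ e ∈ B, (if e ∈ A then -w e else w e)
      = ∑ e ∈ B ∩ A, (-w e) + ∑ e ∈ B \ A, w e := by
    rw [Finset.sum_ite, Finset.filter_mem_eq_inter]
    congr 1
    congr 1
    ext x
    simp [Finset.mem_sdiff, Finset.mem_filter]
  have h4 : ∑ e ∈ A ∩ B, w e = ∑ e ∈ B ∩ A, w e := by rw [Finset.inter_comm]
  rw [h1, h2, h3]
  simp only [Finset.sum_neg_distrib]
  linarith [h4]

lemma improve [Fintype V] [DecidableEq V] (G : SimpleGraph V) (w : Sym2 V → ℚ)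
    (W U : Set V) (e f : Sym2 V) (hef : e ≠ f)
    (heB : e ∈ cutFinset G U) (hfB : f ∈ cutFinset G U)
    (heA : e ∉ cutFinset G W)
    (hbound : ∑ x ∈ cutFinset G U \ {e, f}, |w x| ≤
      w e + (if f ∈ cutFinset G W then -w f else w f)) :
    cutWeight G w W ≤ cutWeight G w (symmDiff W U) ∧
      e ∈ cutFinset G (symmDiff W U) := by
  classical
  constructor
  · rw [cutWeight_symmDiff]
    have hsub : ({e, f} : Finset (Sym2 V)) ⊆ cutFinset G U := by
      intro x hx
      simp only [Finset.mem_insert, Finset.mem_singleton] at hx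
      rcases hx with rfl | rfl <;> assumption
    have hsplit := Finset.sum_sdiff (f := fun x => if x ∈ cutFinset G W then -w x else w x) hsub
    have hpair : ∑ x ∈ ({e, f} : Finset (Sym2 V)),
        (if x ∈ cutFinset G W then -w x else w x)
        = w e + (if f ∈ cutFinset G W then -w f else w f) := by
      rw [Finset.sum_pair hef, if_neg heA]
    have hrest : -∑ x ∈ cutFinset G U \ {e, f}, |w x| ≤
        ∑ x ∈ cutFinset G U \ {e, f}, (if x ∈ cutFinset G W then -w x else w x) := by
      rw [← Finset.sum_neg_distrib]
      apply Finset.sum_le_sum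
      intro i _
      split
      · simp [neg_le_neg_iff, neg_abs_le, le_abs_self]
      · exact neg_abs_le _
    have : 0 ≤ ∑ x ∈ cutFinset G U, (if x ∈ cutFinset G W then -w x else w x) := by
      rw [← hsplit, hpair]
      linarith
    linarith
  · rw [cutFinset_symmDiff, Finset.mem_symmDiff]
    exact Or.inr ⟨heB, heA⟩

/-- Proposition 3: the new triangle-based reduction criterion forcing `x({v1,v2}) = 1`
in some optimal solution of the maximum-cut instance `(G,w)`. -/
theorem stmt5 [Fintype V] [DecidableEq V] (G : SimpleGraph V) (w : Sym2 V → ℚ)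
    (v1 v2 v3 : V)
    (h12 : G.Adj v1 v2) (h13 : G.Adj v1 v3) (h23 : G.Adj v2 v3)
    (hw12 : 0 < w s(v1, v2)) (hw13 : 0 < w s(v1, v3)) (hw23 : w s(v2, v3) < 0)
    (V1 : Set V) (hV1 : V1 ⊂ Set.univ)
    (h12V1 : inCutSet G V1 s(v1, v2)) (h13V1 : inCutSet G V1 s(v1, v3))
    (V2 : Set V) (hV2 : V2 ⊂ Set.univ)
    (h12V2 : inCutSet G V2 s(v1, v2)) (h23V2 : inCutSet G V2 s(v2, v3))
    (hb1 : w s(v1, v2) + w s(v1, v3) ≥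
      ∑ e ∈ cutFinset G V1 \ {s(v1, v2), s(v1, v3)}, |w e|)
    (hb2 : w s(v1, v2) - w s(v2, v3) ≥
      ∑ e ∈ cutFinset G V2 \ {s(v1, v2), s(v2, v3)}, |w e|) :
    ∃ W : Set V, (∀ S : Set V, cutWeight G w S ≤ cutWeight G w W) ∧
      inCutSet G W s(v1, v2) := by
  classical
  obtain ⟨W, hW⟩ := Finite.exists_max (cutWeight G w)
  by_cases h : inCutSet G W s(v1, v2)
  · exact ⟨W, hW, h⟩
  -- v1 and v2 are on the same side of W
  have h12same : v1 ∈ W ↔ v2 ∈ W := by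
    rw [inCut_mk] at h
    push_neg at h
    have := h (G.mem_edgeSet.mpr h12)
    by_cases h1 : v1 ∈ W <;> by_cases h2 : v2 ∈ W <;> simp_all [Xor']
  have hne23 : v2 ≠ v3 := h23.ne
  have hne13 : v1 ≠ v3 := h13.ne
  have hne12 : v1 ≠ v2 := h12.ne
  have hne_e12_e13 : s(v1, v2) ≠ s(v1, v3) := by
    simp [Sym2.eq_iff, hne23, hne12, hne13]

  have hne_e12_e23 : s(v1, v2) ≠ s(v2, v3) := by
    simp [Sym2.eq_iff, hne13, hne12]

  have he12A : s(v1, v2) ∉ cutFinset G W := fun hm => h (mem_cutFinset.mp hm)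
  by_cases h3 : (v3 ∈ W ↔ v1 ∈ W)
  · -- all three on the same side: flip V1
    have he13A : s(v1, v3) ∉ cutFinset G W := by
      rw [mem_cutFinset, inCut_mk]
      rintro ⟨-, hx⟩
      rcases hx with ⟨ha, hb⟩ | ⟨ha, hb⟩ <;> tauto
    have := improve G w W V1 s(v1, v2) s(v1, v3) hne_e12_e13
      (mem_cutFinset.mpr h12V1) (mem_cutFinset.mpr h13V1) he12A
      (by rw [if_neg he13A]; linarith)
    exact ⟨symmDiff W V1, fun S => le_trans (hW S) this.1, mem_cutFinset.mp this.2⟩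
  · -- v3 opposite v1 (and v2): flip V2
    have he23A : s(v2, v3) ∈ cutFinset G W := by
      rw [mem_cutFinset, inCut_mk]
      refine ⟨(G.mem_edgeSet.mpr h23), ?_⟩
      by_cases hv2 : v2 ∈ W <;> by_cases hv3 : v3 ∈ W <;> simp_all [Xor']
    have := improve G w W V2 s(v1, v2) s(v2, v3) hne_e12_e23
      (mem_cutFinset.mpr h12V2) (mem_cutFinset.mpr h23V2) he12A
      (by rw [if_pos he23A]; linarith)
    exact ⟨symmDiff W V2, fun S => le_trans (hW S) this.1, mem_cutFinset.mp this.2⟩
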